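/- Let f, f₁, f₂, … be holomorphic self-maps of the open unit disc 𝔻, let K ⊆ 𝔻 be a set with f(K) ⊆ K and fₙ(K) ⊆ K for all n, and suppose there is a constant 0 < k < 1 with ρ(f(z), f(w)) ≤ k·ρ(z,w) for all z, w ∈ K. Then for every z ∈ K and every positive integer n, the left compositions Fₙ = fₙ ∘ fₙ₋₁ ∘ ⋯ ∘ f₁ satisfy ρ(Fₙ(z), fⁿ(z)) ≤ Σ_{j=1}^{n} k^{n−j} · sup_{w∈K} ρ(f_j(w), f(w)). -/

import Mathlib

open Complex Set Filter Metric

/-- The open unit disc in the complex plane. -/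
def unitDisc : Set ℂ := {z : ℂ | ‖z‖ < 1}

/-- Inverse hyperbolic tangent. -/
noncomputable def artanh (x : ℝ) : ℝ := (1 / 2) * Real.log ((1 + x) / (1 - x))

/-- The hyperbolic distance on the unit disc, induced by the Riemannian metric
`2|dz|/(1-|z|²)`. -/
noncomputable def hdist (z w : ℂ) : ℝ :=
  2 * artanh ‖(z - w) / (1 - (starRingEnd ℂ) w * z)‖

/-- Left compositions: `leftComp f n = f (n-1) ∘ ⋯ ∘ f 1 ∘ f 0`, so that `f k`
plays the role of the `(k+1)`-st map `f_{k+1}` of the sequence. -/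
def leftComp (f : ℕ → ℂ → ℂ) : ℕ → ℂ → ℂ
  | 0 => id
  | n + 1 => f n ∘ leftComp f n

/-- Right compositions: `rightComp g n = g 0 ∘ g 1 ∘ ⋯ ∘ g (n-1)`, so that `g k`
plays the role of the `(k+1)`-st map `g_{k+1}` of the sequence. -/
def rightComp (g : ℕ → ℂ → ℂ) : ℕ → ℂ → ℂ
  | 0 => id
  | n + 1 => rightComp g n ∘ g n

/-! ### Auxiliary lemmas on the pseudo-hyperbolic distance and `artanh` -/

/-- The pseudo-hyperbolic distance on the unit disc. -/
noncomputable def pd (z w : ℂ) : ℝ := ‖(z - w) / (1 - (starRingEnd ℂ) w * z)‖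

lemma hdist_eq_pd (z w : ℂ) : hdist z w = 2 * artanh (pd z w) := rfl

lemma pd_nonneg (z w : ℂ) : 0 ≤ pd z w := norm_nonneg _

lemma denom_ne (z w : ℂ) (hz : ‖z‖ < 1) (hw : ‖w‖ < 1) :
    (1 : ℂ) - (starRingEnd ℂ) w * z ≠ 0 := by
  intro h
  have h1 : (starRingEnd ℂ) w * z = 1 := by linear_combination -h
  have : ‖(starRingEnd ℂ) w * z‖ = 1 := by rw [h1]; simp
  rw [norm_mul, Complex.norm_conj] at this
  nlinarith [norm_nonneg z, norm_nonneg w]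

lemma normSq_identity (a b : ℂ) :
    Complex.normSq (1 - (starRingEnd ℂ) b * a) - Complex.normSq (a - b)
      = (1 - Complex.normSq a) * (1 - Complex.normSq b) := by
  simp [Complex.normSq_apply, Complex.sub_re, Complex.sub_im, Complex.mul_re, Complex.mul_im,
    Complex.conj_re, Complex.conj_im, Complex.one_re, Complex.one_im]
  ring

lemma pd_lt_one (a b : ℂ) (ha : ‖a‖ < 1) (hb : ‖b‖ < 1) :
    pd a b < 1 := by
  have hden := denom_ne a b ha hb
  have h1 : Complex.normSq (a - b) < Complex.normSq (1 - (starRingEnd ℂ) b * a) := by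
    have := normSq_identity a b
    have ha' : Complex.normSq a < 1 := by rw [← Complex.sq_norm]; nlinarith [norm_nonneg a]
    have hb' : Complex.normSq b < 1 := by rw [← Complex.sq_norm]; nlinarith [norm_nonneg b]
    nlinarith
  have h2 : ‖a - b‖ < ‖1 - (starRingEnd ℂ) b * a‖ := by
    rw [Complex.norm_def, Complex.norm_def]
    exact Real.sqrt_lt_sqrt (Complex.normSq_nonneg _) h1
  rw [pd, norm_div, div_lt_one (lt_of_le_of_lt (norm_nonneg _) h2)]
  exact h2

lemma pd_symm (z w : ℂ) : pd z w = pd w z := by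
  unfold pd
  rw [norm_div, norm_div]
  congr 1
  · exact norm_sub_rev z w
  · rw [show (1:ℂ) - (starRingEnd ℂ) z * w = (starRingEnd ℂ) (1 - (starRingEnd ℂ) w * z) by
      rw [map_sub, map_one, map_mul, Complex.conj_conj, mul_comm], Complex.norm_conj]

lemma pd_moebius (a b c : ℂ) (hb : ‖b‖ < 1)
    (hba : (1:ℂ) - (starRingEnd ℂ) b * a ≠ 0)
    (hbc : (1:ℂ) - (starRingEnd ℂ) b * c ≠ 0)
    (hca : (1:ℂ) - (starRingEnd ℂ) c * a ≠ 0) :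
    pd a c = pd ((a - b) / (1 - (starRingEnd ℂ) b * a)) ((c - b) / (1 - (starRingEnd ℂ) b * c)) := by
  set x := (a - b) / (1 - (starRingEnd ℂ) b * a) with hx
  set y := (c - b) / (1 - (starRingEnd ℂ) b * c) with hy
  have hbc' : (1:ℂ) - b * (starRingEnd ℂ) c ≠ 0 := by
    intro h
    apply hbc
    have := congrArg (starRingEnd ℂ) h
    simpa [mul_comm] using this
  have hnb : (1:ℂ) - b * (starRingEnd ℂ) b ≠ 0 := by
    intro h
    have h1 : b * (starRingEnd ℂ) b = 1 := by linear_combination -h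
    have : ‖b‖ * ‖b‖ = 1 := by
      have := congrArg norm h1
      simpa [norm_mul, Complex.norm_conj] using this
    nlinarith [norm_nonneg b]
  have hconjy : (starRingEnd ℂ) y = ((starRingEnd ℂ) c - (starRingEnd ℂ) b) / (1 - b * (starRingEnd ℂ) c) := by
    rw [hy, map_div₀, map_sub, map_sub, map_one, map_mul, Complex.conj_conj]
  have hnum : x - y = ((a - c) * (1 - b * (starRingEnd ℂ) b)) /
      ((1 - (starRingEnd ℂ) b * a) * (1 - (starRingEnd ℂ) b * c)) := by
    rw [hx, hy, div_sub_div _ _ hba hbc]; congr 1; ring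
  have hden : (1:ℂ) - (starRingEnd ℂ) y * x = ((1 - (starRingEnd ℂ) c * a) * (1 - b * (starRingEnd ℂ) b)) /
      ((1 - b * (starRingEnd ℂ) c) * (1 - (starRingEnd ℂ) b * a)) := by
    rw [hconjy, hx, div_mul_div_comm, one_sub_div (mul_ne_zero hbc' hba)]; congr 1; ring
  have key : (x - y) / (1 - (starRingEnd ℂ) y * x)
      = ((a - c) * (1 - b * (starRingEnd ℂ) c)) / ((1 - (starRingEnd ℂ) b * c) * (1 - (starRingEnd ℂ) c * a)) := by
    rw [hnum, hden]
    rw [div_div_div_eq, div_eq_div_iff (mul_ne_zero (mul_ne_zero hba hbc) (mul_ne_zero hca hnb)) (mul_ne_zero hbc hca)]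
    ring
  have habs : ‖1 - b * (starRingEnd ℂ) c‖ = ‖1 - (starRingEnd ℂ) b * c‖ := by
    rw [show (1:ℂ) - b * (starRingEnd ℂ) c = (starRingEnd ℂ) (1 - (starRingEnd ℂ) b * c) by
      rw [map_sub, map_one, map_mul, Complex.conj_conj, mul_comm], Complex.norm_conj]
  rw [pd, pd, key, norm_div, norm_div, norm_mul, norm_mul, habs]
  rw [mul_comm ‖1 - (starRingEnd ℂ) b * c‖]
  rw [mul_div_mul_right _ _ (norm_ne_zero_iff.mpr hbc)]

lemma pd_zero_ineq (x y : ℂ) (hx : ‖x‖ < 1) (hy : ‖y‖ < 1) :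
    pd x y ≤ (‖x‖ + ‖y‖) / (1 + ‖x‖ * ‖y‖) := by
  set r := ‖x‖ with hr
  set s := ‖y‖ with hs
  have hr0 : 0 ≤ r := norm_nonneg x
  have hs0 : 0 ≤ s := norm_nonneg y
  set t := ((starRingEnd ℂ) y * x).re with ht
  have htle : |t| ≤ r * s := by
    calc |t| ≤ ‖(starRingEnd ℂ) y * x‖ := Complex.abs_re_le_norm _
    _ = r * s := by rw [norm_mul, Complex.norm_conj]; ring
  have hn1 : Complex.normSq (x - y) = r ^ 2 + s ^ 2 - 2 * t := by
    have e1 : (x * (starRingEnd ℂ) y).re = t := by rw [ht, mul_comm]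
    rw [Complex.normSq_sub, ← Complex.sq_norm, ← Complex.sq_norm, e1, hr, hs]
  have hn2 : Complex.normSq (1 - (starRingEnd ℂ) y * x) = 1 - 2 * t + r ^ 2 * s ^ 2 := by
    have e1 : ((1:ℂ) * (starRingEnd ℂ) ((starRingEnd ℂ) y * x)).re = t := by
      rw [one_mul, Complex.conj_re, ht]
    rw [Complex.normSq_sub, e1, Complex.normSq_one, Complex.normSq_mul, Complex.normSq_conj,
      ← Complex.sq_norm, ← Complex.sq_norm, ← hr, ← hs]
    ring
  have hd0 : 0 < ‖1 - (starRingEnd ℂ) y * x‖ := by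
    have : 0 < Complex.normSq (1 - (starRingEnd ℂ) y * x) := by
      have hrs : r * s < 1 := by nlinarith
      rw [hn2]; nlinarith [(abs_le.mp htle).2, mul_pos (sub_pos.2 hrs) (sub_pos.2 hrs)]
    rw [Complex.norm_def]; positivity
  have hds0 : 0 < 1 + r * s := by nlinarith
  rw [pd, norm_div, div_le_div_iff₀ hd0 hds0]
  have key : (‖x - y‖ * (1 + r * s)) ^ 2 ≤ ((r + s) * ‖1 - (starRingEnd ℂ) y * x‖) ^ 2 := by
    rw [mul_pow, mul_pow, Complex.sq_norm, Complex.sq_norm, hn1, hn2]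
    have hfac : (1 + r*s)^2 - (r+s)^2 = (1-r)*(1-s)*(1+r)*(1+s) := by ring
    nlinarith [mul_nonneg (by nlinarith [abs_le.mp htle] : (0:ℝ) ≤ t + r * s)
      (by nlinarith [hfac, mul_pos (mul_pos (mul_pos (by linarith : (0:ℝ)<1-r) (by linarith : (0:ℝ)<1-s)) (by linarith : (0:ℝ)<1+r)) (by linarith : (0:ℝ)<1+s)] : (0:ℝ) ≤ (1 + r*s)^2 - (r+s)^2)]
  nlinarith [norm_nonneg (x - y), key, mul_nonneg (norm_nonneg (x-y)) hds0.le,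
    mul_nonneg (by positivity : (0:ℝ) ≤ r + s) hd0.le]

lemma artanh_mono {u v : ℝ} (hu : 0 ≤ u) (huv : u ≤ v) (hv : v < 1) : artanh u ≤ artanh v := by
  unfold artanh
  have h1 : (0:ℝ) < 1 - v := by linarith
  have h2 : (0:ℝ) < 1 - u := by linarith
  have : (1 + u) / (1 - u) ≤ (1 + v) / (1 - v) := by
    rw [div_le_div_iff₀ h2 h1]; nlinarith
  have hpos : (0:ℝ) < (1 + u) / (1 - u) := by positivity
  nlinarith [Real.log_le_log hpos this]

lemma artanh_nonneg' {x : ℝ} (hx : 0 ≤ x) (hx1 : x < 1) : 0 ≤ artanh x := by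
  unfold artanh
  have : (1:ℝ) ≤ (1 + x) / (1 - x) := by
    rw [le_div_iff₀ (by linarith)]; linarith
  nlinarith [Real.log_nonneg this]

lemma artanh_add {x y : ℝ} (hx : 0 ≤ x) (hx1 : x < 1) (hy : 0 ≤ y) (hy1 : y < 1) :
    artanh ((x + y) / (1 + x * y)) = artanh x + artanh y := by
  unfold artanh
  have h1 : (0:ℝ) < 1 - x := by linarith
  have h2 : (0:ℝ) < 1 - y := by linarith
  have h3 : (0:ℝ) < 1 + x * y := by nlinarith
  have h4 : 1 - (x + y) / (1 + x * y) = (1-x)*(1-y)/(1 + x*y) := by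
    field_simp; ring
  have h5 : 1 + (x + y) / (1 + x * y) = (1+x)*(1+y)/(1 + x*y) := by
    field_simp; ring
  have harg : (1 + (x + y) / (1 + x * y)) / (1 - (x + y) / (1 + x * y))
      = ((1 + x) / (1 - x)) * ((1 + y) / (1 - y)) := by
    rw [h4, h5, div_div_div_comm, div_self h3.ne', div_one, ← div_mul_div_comm]
  rw [harg, Real.log_mul (by positivity) (by positivity)]
  ring

lemma hdist_nonneg {a b : ℂ} (ha : a ∈ unitDisc) (hb : b ∈ unitDisc) : 0 ≤ hdist a b := by
  rw [hdist_eq_pd]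
  have := artanh_nonneg' (pd_nonneg a b) (pd_lt_one a b ha hb)
  linarith

lemma hdist_self (z : ℂ) : hdist z z = 0 := by
  simp [hdist, artanh]

lemma hdist_triangle {a b c : ℂ} (ha : a ∈ unitDisc) (hb : b ∈ unitDisc) (hc : c ∈ unitDisc) :
    hdist a c ≤ hdist a b + hdist b c := by
  have ha' : ‖a‖ < 1 := ha
  have hb' : ‖b‖ < 1 := hb
  have hc' : ‖c‖ < 1 := hc
  have hba := denom_ne a b ha' hb'
  have hbc := denom_ne c b hc' hb'
  have hca := denom_ne a c ha' hc'
  set x := (a - b) / (1 - (starRingEnd ℂ) b * a) with hx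
  set y := (c - b) / (1 - (starRingEnd ℂ) b * c) with hy
  have habsx : ‖x‖ = pd a b := rfl
  have habsy : ‖y‖ = pd c b := rfl
  have hxlt : ‖x‖ < 1 := by rw [habsx]; exact pd_lt_one a b ha' hb'
  have hylt : ‖y‖ < 1 := by rw [habsy]; exact pd_lt_one c b hc' hb'
  have hmoeb := pd_moebius a b c hb' hba hbc hca
  have hineq : pd a c ≤ (pd a b + pd b c) / (1 + pd a b * pd b c) := by
    have := pd_zero_ineq x y hxlt hylt
    rw [habsx, habsy, pd_symm c b] at this
    rw [hmoeb]
    exact this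
  set p := pd a b with hp
  set q := pd b c with hq
  have hp0 : 0 ≤ p := pd_nonneg a b
  have hq0 : 0 ≤ q := pd_nonneg b c
  have hp1 : p < 1 := pd_lt_one a b ha' hb'
  have hq1 : q < 1 := pd_lt_one b c hb' hc'
  have hlt1 : (p + q) / (1 + p * q) < 1 := by
    rw [div_lt_one (by nlinarith)]
    nlinarith [mul_pos (sub_pos.2 hp1) (sub_pos.2 hq1)]
  rw [hdist_eq_pd, hdist_eq_pd, hdist_eq_pd]
  have := artanh_mono (pd_nonneg a c) hineq hlt1
  rw [artanh_add hp0 hp1 hq0 hq1] at this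
  linarith

/-- **Contraction estimate for left compositions (key inequality in Theorem 4).**
Indices are shifted: `fseq j` is the map `f_{j+1}`, so the summand `j ∈ range n`,
namely k^(n-1-j) ⬝ sup_{w ∈ K} ρ(f_{j+1} w, f w), matches the term
k^(n-j') ⬝ sup_{w ∈ K} ρ(f_{j'} w, f w) for j' = j+1 running from 1 to n.
The suprema are assumed finite via the `BddAbove` hypothesis. -/
theorem left_composition_contraction_estimate
    (f : ℂ → ℂ) (fseq : ℕ → ℂ → ℂ) (K : Set ℂ) (k : ℝ)
    (hf : DifferentiableOn ℂ f unitDisc) (hfmap : MapsTo f unitDisc unitDisc)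
    (hholo : ∀ n, DifferentiableOn ℂ (fseq n) unitDisc)
    (hself : ∀ n, MapsTo (fseq n) unitDisc unitDisc)
    (hK : K ⊆ unitDisc)
    (hfK : MapsTo f K K) (hfseqK : ∀ n, MapsTo (fseq n) K K)
    (hk0 : 0 < k) (hk1 : k < 1)
    (hcontr : ∀ z ∈ K, ∀ w ∈ K, hdist (f z) (f w) ≤ k * hdist z w)
    (hbdd : ∀ n, BddAbove (Set.range fun w : K => hdist (fseq n w) (f w))) :
    ∀ z ∈ K, ∀ n : ℕ, 0 < n →
      hdist (leftComp fseq n z) (f^[n] z) ≤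
        ∑ j ∈ Finset.range n, k ^ (n - 1 - j) * ⨆ w : K, hdist (fseq j w) (f w) := by
  intro z hz n hn
  clear hn
  -- membership facts
  have hmem : ∀ m, leftComp fseq m z ∈ K := by
    intro m
    induction m with
    | zero => exact hz
    | succ m ih => exact hfseqK m ih
  have hit : ∀ m, f^[m] z ∈ K := by
    intro m
    induction m with
    | zero => exact hz
    | succ m ih => rw [Function.iterate_succ_apply']; exact hfK ih
  -- supremum bound
  have hsup : ∀ m, ∀ w ∈ K, hdist (fseq m w) (f w) ≤ ⨆ w : K, hdist (fseq m w) (f w) := by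
    intro m w hw
    exact le_ciSup (hbdd m) ⟨w, hw⟩
  clear hf hholo
  induction n with
  | zero =>
    simp [leftComp, hdist_self]
  | succ n ih =>
    have step1 : leftComp fseq (n + 1) z = fseq n (leftComp fseq n z) := rfl
    have step2 : f^[n + 1] z = f (f^[n] z) := Function.iterate_succ_apply' f n z
    have hF : leftComp fseq n z ∈ K := hmem n
    have hI : f^[n] z ∈ K := hit n
    have tri : hdist (leftComp fseq (n+1) z) (f^[n+1] z)
        ≤ hdist (fseq n (leftComp fseq n z)) (f (leftComp fseq n z))
          + hdist (f (leftComp fseq n z)) (f (f^[n] z)) := by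
      rw [step1, step2]
      exact hdist_triangle (hself n (hK hF)) (hfmap (hK hF)) (hfmap (hK hI))
    have hc : hdist (f (leftComp fseq n z)) (f (f^[n] z))
        ≤ k * hdist (leftComp fseq n z) (f^[n] z) :=
      hcontr _ hF _ hI
    have hsn : hdist (fseq n (leftComp fseq n z)) (f (leftComp fseq n z))
        ≤ ⨆ w : K, hdist (fseq n w) (f w) := hsup n _ hF
    have hmul : k * hdist (leftComp fseq n z) (f^[n] z)
        ≤ k * ∑ j ∈ Finset.range n, k ^ (n - 1 - j) * ⨆ w : K, hdist (fseq j w) (f w) :=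
      mul_le_mul_of_nonneg_left ih hk0.le
    have hsum : k * (∑ j ∈ Finset.range n, k ^ (n - 1 - j) * ⨆ w : K, hdist (fseq j w) (f w))
        + (⨆ w : K, hdist (fseq n w) (f w))
        = ∑ j ∈ Finset.range (n+1), k ^ (n + 1 - 1 - j) * ⨆ w : K, hdist (fseq j w) (f w) := by
      rw [Finset.sum_range_succ, Finset.mul_sum]
      congr 1
      · apply Finset.sum_congr rfl
        intro j hj
        have hjn : j < n := Finset.mem_range.mp hj
        rw [← mul_assoc, show k * k ^ (n - 1 - j) = k ^ (n + 1 - 1 - j) by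
          rw [mul_comm, ← pow_succ]
          congr 1
          omega]
      · simp
    calc hdist (leftComp fseq (n+1) z) (f^[n+1] z)
        ≤ hdist (fseq n (leftComp fseq n z)) (f (leftComp fseq n z))
          + hdist (f (leftComp fseq n z)) (f (f^[n] z)) := tri
      _ ≤ (⨆ w : K, hdist (fseq n w) (f w))
          + k * ∑ j ∈ Finset.range n, k ^ (n - 1 - j) * ⨆ w : K, hdist (fseq j w) (f w) := by
          have := le_trans hc hmul
          linarith
      _ = ∑ j ∈ Finset.range (n+1), k ^ (n + 1 - 1 - j) * ⨆ w : K, hdist (fseq j w) (f w) := by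
          rw [← hsum]; ring
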